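/- Let (x₁, x₂, x₃, x₄) be a nonzero element of ker(Φ₄). Then the subspace of V(4) spanned by x₁, x₂, x₃, x₄ has dimension exactly 3. -/

import Mathlib

open Submodule

/-- Index type for the distinguished basis of `V(n)`: pairs `(j,i)` with `i < j`. -/
abbrev VIdx (n : ℕ) := {q : Fin n × Fin n // q.2 < q.1}

/-- Index type for the distinguished basis of `W(n)`: triples `(j,i,k)` with `i < j`, `i ≤ k`. -/
abbrev WIdx (n : ℕ) := {t : Fin n × Fin n × Fin n // t.2.1 < t.1 ∧ t.2.1 ≤ t.2.2}

/-- The vector space `V(n)` over `F`. -/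
abbrev V (F : Type*) [Field F] (n : ℕ) := VIdx n → F

/-- The vector space `W(n)` over `F`. -/
abbrev W (F : Type*) [Field F] (n : ℕ) := WIdx n → F

variable (F : Type*) [Field F] (n : ℕ)

/-- The vector `v[j,i]`, with the conventions `v[i,j] = -v[j,i]` and `v[i,i] = 0`. -/
noncomputable def v (j i : Fin n) : V F n :=
  if h : i < j then Pi.single (⟨(j, i), h⟩ : VIdx n) 1
  else if h' : j < i then -Pi.single (⟨(i, j), h'⟩ : VIdx n) 1
  else 0

/-- The vector `w[j,i,k]` (the basis vector when `i < j` and `i ≤ k`, zero otherwise). -/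
noncomputable def w (j i k : Fin n) : W F n :=
  if h : i < j ∧ i ≤ k then Pi.single (⟨(j, i, k), h⟩ : WIdx n) 1 else 0

/-- The linear map `φ_k : V(n) → W(n)` determined on basis vectors by
`φ_k(v[j,i]) = w[j,i,k]` if `i ≤ k`, and `φ_k(v[j,i]) = w[j,k,i] - w[i,k,j]` if `k < i`. -/
noncomputable def phi (k : Fin n) : V F n →ₗ[F] W F n :=
  (Pi.basisFun F (VIdx n)).constr F fun q =>
    if q.1.2 ≤ k then w F n q.1.1 q.1.2 k
    else w F n q.1.1 k q.1.2 - w F n q.1.2 k q.1.1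

/-- The linear map `Φ_n : V(n)ⁿ → W(n)`, `Φ_n(x₁,…,x_n) = φ₁(x₁) + ⋯ + φ_n(x_n)`. -/
noncomputable def Phi : (Fin n → V F n) →ₗ[F] W F n :=
  ∑ k : Fin n, (phi F n k).comp (LinearMap.proj k)

/-- For `X ≤ V(n)`, the subspace `X* ≤ W(n)`: the span of `φ₁(X) ∪ ⋯ ∪ φ_n(X)`. -/
noncomputable def starV (X : Submodule F (V F n)) : Submodule F (W F n) :=
  ⨆ k : Fin n, X.map (phi F n k)

/-- For `Y ≤ W(n)`, the subspace `Y* ≤ V(n)`: the intersection `⋂ₖ φ_k⁻¹(Y)`. -/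
noncomputable def starW (Y : Submodule F (W F n)) : Submodule F (V F n) :=
  ⨅ k : Fin n, Y.comap (phi F n k)


abbrev q10 : VIdx 4 := ⟨(1,0), by decide⟩
abbrev q20 : VIdx 4 := ⟨(2,0), by decide⟩
abbrev q30 : VIdx 4 := ⟨(3,0), by decide⟩
abbrev q21 : VIdx 4 := ⟨(2,1), by decide⟩
abbrev q31 : VIdx 4 := ⟨(3,1), by decide⟩
abbrev q32 : VIdx 4 := ⟨(3,2), by decide⟩

lemma phi_apply (F : Type*) [Field F] (n : ℕ) (k : Fin n) (y : V F n) : phi F n k y =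
    ∑ q : VIdx n, y q • (if q.1.2 ≤ k then w F n q.1.1 q.1.2 k
      else w F n q.1.1 k q.1.2 - w F n q.1.2 k q.1.1) := by
  simp [phi, Module.Basis.constr_apply_fintype, Pi.basisFun_equivFun]

lemma sum_VIdx {M : Type*} [AddCommMonoid M] (f : VIdx 4 → M) :
    ∑ q, f q = f q10 + f q20 + f q30 + f q21 + f q31 + f q32 := by
  rw [show (Finset.univ : Finset (VIdx 4)) = {q10, q20, q30, q21, q31, q32} from by decide]
  simp [Finset.sum_insert, Finset.mem_insert]
  abel

lemma V_ext {F : Type*} [Field F] (y : V F 4) (h1 : y q10 = 0) (h2 : y q20 = 0)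
    (h3 : y q30 = 0) (h4 : y q21 = 0) (h5 : y q31 = 0) (h6 : y q32 = 0) : y = 0 := by
  funext q
  obtain ⟨⟨j, i⟩, h⟩ := q
  fin_cases j <;> fin_cases i <;> first
    | exact absurd h (by decide)
    | assumption

lemma indep3 {F : Type*} [Field F] {ι : Type*} (y : Fin 3 → ι → F) (q : Fin 3 → ι)
    (hd : ∀ i, y i (q i) ≠ 0) (ho : ∀ i j, i ≠ j → y i (q j) = 0) :
    LinearIndependent F y := by
  rw [Fintype.linearIndependent_iff]
  intro g hg i
  have h := congrFun hg (q i)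
  rw [Finset.sum_apply] at h
  rw [Finset.sum_eq_single i] at h
  · rcases (show g i = 0 ∨ y i (q i) = 0 by simpa using h) with h' | h'
    · exact h'
    · exact absurd h' (hd i)
  · intro b _ hb
    simp [ho b i hb]
  · intro hi
    exact absurd (Finset.mem_univ i) hi

lemma span_rank3 {F M : Type*} [Field F] [AddCommGroup M] [Module F M]
    (x : Fin 4 → M) (y : Fin 3 → M)
    (hsub : ∀ k, x k ∈ Submodule.span F (Set.range y))
    (hsup : ∀ i, ∃ k, y i = x k)
    (hind : LinearIndependent F y) :
    Module.finrank F ↥(Submodule.span F (Set.range x)) = 3 := by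
  have h1 : Submodule.span F (Set.range x) = Submodule.span F (Set.range y) := by
    apply le_antisymm
    · rw [Submodule.span_le]; rintro z ⟨k, rfl⟩; exact hsub k
    · rw [Submodule.span_le]; rintro z ⟨i, rfl⟩
      obtain ⟨k, hk⟩ := hsup i
      rw [hk]
      exact Submodule.subset_span ⟨k, rfl⟩
  rw [h1, finrank_span_eq_card hind]
  simp

set_option maxHeartbeats 4000000 in
/-- If `(x₁,x₂,x₃,x₄)` is a nonzero element of `ker(Φ₄)`, then the span of
`x₁,x₂,x₃,x₄` in `V(4)` has dimension exactly `3`. -/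
theorem statement10 (p : ℕ) [Fact p.Prime] (hp2 : p ≠ 2)
    (x : Fin 4 → V (ZMod p) 4) (hx : Phi (ZMod p) 4 x = 0) (hx0 : x ≠ 0) :
    Module.finrank (ZMod p) ↥(Submodule.span (ZMod p) (Set.range x)) = 3 := by
  have hw : ∀ t : WIdx 4, ∑ k : Fin 4, (phi (ZMod p) 4 k) (x k) t = 0 := by
    intro t
    have h := congrFun hx t
    simpa [Phi, LinearMap.sum_apply, Finset.sum_apply] using h

  have e100 := hw ⟨(1,0,0), by decide⟩
  have e200 := hw ⟨(2,0,0), by decide⟩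
  have e300 := hw ⟨(3,0,0), by decide⟩
  have e101 := hw ⟨(1,0,1), by decide⟩
  have e211 := hw ⟨(2,1,1), by decide⟩
  have e311 := hw ⟨(3,1,1), by decide⟩
  have e202 := hw ⟨(2,0,2), by decide⟩
  have e212 := hw ⟨(2,1,2), by decide⟩
  have e322 := hw ⟨(3,2,2), by decide⟩
  have e303 := hw ⟨(3,0,3), by decide⟩
  have e313 := hw ⟨(3,1,3), by decide⟩
  have e323 := hw ⟨(3,2,3), by decide⟩
  have e102 := hw ⟨(1,0,2), by decide⟩
  have e201 := hw ⟨(2,0,1), by decide⟩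
  have e103 := hw ⟨(1,0,3), by decide⟩
  have e301 := hw ⟨(3,0,1), by decide⟩
  have e203 := hw ⟨(2,0,3), by decide⟩
  have e302 := hw ⟨(3,0,2), by decide⟩
  have e213 := hw ⟨(2,1,3), by decide⟩
  have e312 := hw ⟨(3,1,2), by decide⟩
  simp (config := { decide := true }) only [phi_apply, sum_VIdx, Fin.sum_univ_four,
    Finset.sum_apply, Pi.smul_apply, Pi.sub_apply, w, Pi.single_apply, smul_eq_mul,
    mul_one, mul_zero, mul_neg, add_zero, zero_add, sub_zero, zero_sub, sub_self, neg_zero,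
    Pi.zero_apply, if_true, if_false, dite_true, dite_false, one_mul, neg_neg,
    sub_neg_eq_add, add_sub_cancel_left] at e100 e200 e300 e101 e211 e311 e202 e212 e322 e303 e313 e323 e102 e201 e103 e301 e203 e302 e213 e312
  have z010 : x 0 q10 = 0 := by first | linear_combination e100 | linear_combination -e100
  have z020 : x 0 q20 = 0 := by first | linear_combination e200 | linear_combination -e200
  have z030 : x 0 q30 = 0 := by first | linear_combination e300 | linear_combination -e300
  have z110 : x 1 q10 = 0 := by first | linear_combination e101 | linear_combination -e101
  have z121 : x 1 q21 = 0 := by first | linear_combination e211 | linear_combination -e211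
  have z131 : x 1 q31 = 0 := by first | linear_combination e311 | linear_combination -e311
  have z220 : x 2 q20 = 0 := by first | linear_combination e202 | linear_combination -e202
  have z221 : x 2 q21 = 0 := by first | linear_combination e212 | linear_combination -e212
  have z232 : x 2 q32 = 0 := by first | linear_combination e322 | linear_combination -e322
  have z330 : x 3 q30 = 0 := by first | linear_combination e303 | linear_combination -e303
  have z331 : x 3 q31 = 0 := by first | linear_combination e313 | linear_combination -e313
  have z332 : x 3 q32 = 0 := by first | linear_combination e323 | linear_combination -e323
  have l1 : x 0 q21 = x 2 q10 := by first | linear_combination e102 | linear_combination -e102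
  have l2 : x 1 q20 = -(x 0 q21) := by first | linear_combination e201 | linear_combination -e201
  have l3 : x 0 q31 = x 3 q10 := by first | linear_combination e103 | linear_combination -e103
  have l4 : x 1 q30 = -(x 0 q31) := by first | linear_combination e301 | linear_combination -e301
  have l5 : x 0 q32 = x 3 q20 := by first | linear_combination e203 | linear_combination -e203
  have l6 : x 2 q30 = -(x 0 q32) := by first | linear_combination e302 | linear_combination -e302
  have l7 : x 1 q32 = x 3 q21 := by first | linear_combination e213 | linear_combination -e213
  have l8 : x 2 q31 = -(x 1 q32) := by first | linear_combination e312 | linear_combination -e312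

  by_cases hA : x 2 q10 = 0
  · by_cases hB : x 3 q10 = 0
    · by_cases hC : x 3 q20 = 0
      · by_cases hD : x 3 q21 = 0
        · -- all parameters zero : x = 0, contradiction
          exfalso
          apply hx0
          funext k
          fin_cases k <;>
            [skip; skip; skip; skip] <;>
            (apply V_ext <;> simp [z010, z020, z030, z110, z121, z131, z220, z221, z232, z330, z331, z332, l1, l2, l3, l4, l5, l6, l7, l8, hA, hB, hC, hD])
        · -- d-case
          have heq : x 0 = ((x 3 q21)⁻¹ * (x 3 q20)) • x 1 - ((x 3 q21)⁻¹ * (x 3 q10)) • x 2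
              + ((x 3 q21)⁻¹ * (x 2 q10)) • x 3 := by
            rw [← sub_eq_zero]
            apply V_ext <;>
              simp only [Pi.sub_apply, Pi.add_apply, Pi.smul_apply, smul_eq_mul,
                z010, z020, z030, z110, z121, z131, z220, z221, z232, z330, z331, z332, l1, l2, l3, l4, l5, l6, l7, l8] <;>
              field_simp <;> ring
          apply span_rank3 x ![x 1, x 2, x 3]
          · intro k
            fin_cases k
            · show x 0 ∈ Submodule.span (ZMod p) (Set.range ![x 1, x 2, x 3])
              rw [heq]
              refine add_mem (sub_mem (smul_mem _ _ (Submodule.subset_span ⟨0, rfl⟩))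
                (smul_mem _ _ (Submodule.subset_span ⟨1, rfl⟩)))
                (smul_mem _ _ (Submodule.subset_span ⟨2, rfl⟩))
            · exact Submodule.subset_span ⟨0, rfl⟩
            · exact Submodule.subset_span ⟨1, rfl⟩
            · exact Submodule.subset_span ⟨2, rfl⟩
          · intro i
            fin_cases i
            exacts [⟨1, rfl⟩, ⟨2, rfl⟩, ⟨3, rfl⟩]
          · apply indep3 _ ![q32, q31, q21]
            · intro i
              fin_cases i <;> simp [z010, z020, z030, z110, z121, z131, z220, z221, z232, z330, z331, z332, l1, l2, l3, l4, l5, l6, l7, l8, hD]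
            · intro i j hij
              fin_cases i <;> fin_cases j <;>
                first
                  | exact absurd rfl hij
                  | simp [Matrix.vecHead, Matrix.vecTail, z010, z020, z030, z110, z121, z131, z220, z221, z232, z330, z331, z332, l1, l2, l3, l4, l5, l6, l7, l8]
      · -- c-case
        have heq : x 1 = ((x 3 q20)⁻¹ * (x 3 q21)) • x 0 + ((x 3 q20)⁻¹ * (x 3 q10)) • x 2
            - ((x 3 q20)⁻¹ * (x 2 q10)) • x 3 := by
          rw [← sub_eq_zero]
          apply V_ext <;>
            simp only [Pi.sub_apply, Pi.add_apply, Pi.smul_apply, smul_eq_mul,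
              z010, z020, z030, z110, z121, z131, z220, z221, z232, z330, z331, z332, l1, l2, l3, l4, l5, l6, l7, l8] <;>
            field_simp <;> ring
        apply span_rank3 x ![x 0, x 2, x 3]
        · intro k
          fin_cases k
          · exact Submodule.subset_span ⟨0, rfl⟩
          · show x 1 ∈ Submodule.span (ZMod p) (Set.range ![x 0, x 2, x 3])
            rw [heq]
            refine sub_mem (add_mem (smul_mem _ _ (Submodule.subset_span ⟨0, rfl⟩))
              (smul_mem _ _ (Submodule.subset_span ⟨1, rfl⟩)))
              (smul_mem _ _ (Submodule.subset_span ⟨2, rfl⟩))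
          · exact Submodule.subset_span ⟨1, rfl⟩
          · exact Submodule.subset_span ⟨2, rfl⟩
        · intro i
          fin_cases i
          exacts [⟨0, rfl⟩, ⟨2, rfl⟩, ⟨3, rfl⟩]
        · apply indep3 _ ![q32, q30, q20]
          · intro i
            fin_cases i <;> simp [z010, z020, z030, z110, z121, z131, z220, z221, z232, z330, z331, z332, l1, l2, l3, l4, l5, l6, l7, l8, hC]
          · intro i j hij
            fin_cases i <;> fin_cases j <;>
                first
                  | exact absurd rfl hij
                  | simp [Matrix.vecHead, Matrix.vecTail, z010, z020, z030, z110, z121, z131, z220, z221, z232, z330, z331, z332, l1, l2, l3, l4, l5, l6, l7, l8]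
    · -- b-case
      have heq : x 2 = -((x 3 q10)⁻¹ * (x 3 q21)) • x 0 + ((x 3 q10)⁻¹ * (x 3 q20)) • x 1
          + ((x 3 q10)⁻¹ * (x 2 q10)) • x 3 := by
        rw [← sub_eq_zero]
        apply V_ext <;>
          simp only [Pi.sub_apply, Pi.add_apply, Pi.smul_apply, smul_eq_mul,
            z010, z020, z030, z110, z121, z131, z220, z221, z232, z330, z331, z332, l1, l2, l3, l4, l5, l6, l7, l8] <;>
          field_simp <;> ring
      apply span_rank3 x ![x 0, x 1, x 3]
      · intro k
        fin_cases k
        · exact Submodule.subset_span ⟨0, rfl⟩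
        · exact Submodule.subset_span ⟨1, rfl⟩
        · show x 2 ∈ Submodule.span (ZMod p) (Set.range ![x 0, x 1, x 3])
          rw [heq]
          refine add_mem (add_mem (smul_mem _ _ (Submodule.subset_span ⟨0, rfl⟩))
            (smul_mem _ _ (Submodule.subset_span ⟨1, rfl⟩)))
            (smul_mem _ _ (Submodule.subset_span ⟨2, rfl⟩))
        · exact Submodule.subset_span ⟨2, rfl⟩
      · intro i
        fin_cases i
        exacts [⟨0, rfl⟩, ⟨1, rfl⟩, ⟨3, rfl⟩]
      · apply indep3 _ ![q31, q30, q10]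
        · intro i
          fin_cases i <;> simp [z010, z020, z030, z110, z121, z131, z220, z221, z232, z330, z331, z332, l1, l2, l3, l4, l5, l6, l7, l8, hB]
        · intro i j hij
          fin_cases i <;> fin_cases j <;>
                first
                  | exact absurd rfl hij
                  | simp [Matrix.vecHead, Matrix.vecTail, z010, z020, z030, z110, z121, z131, z220, z221, z232, z330, z331, z332, l1, l2, l3, l4, l5, l6, l7, l8]
  · -- a-case
    have heq : x 3 = ((x 2 q10)⁻¹ * (x 3 q21)) • x 0 - ((x 2 q10)⁻¹ * (x 3 q20)) • x 1
        + ((x 2 q10)⁻¹ * (x 3 q10)) • x 2 := by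
      rw [← sub_eq_zero]
      apply V_ext <;>
        simp only [Pi.sub_apply, Pi.add_apply, Pi.smul_apply, smul_eq_mul,
          z010, z020, z030, z110, z121, z131, z220, z221, z232, z330, z331, z332, l1, l2, l3, l4, l5, l6, l7, l8] <;>
        field_simp <;> ring
    apply span_rank3 x ![x 0, x 1, x 2]
    · intro k
      fin_cases k
      · exact Submodule.subset_span ⟨0, rfl⟩
      · exact Submodule.subset_span ⟨1, rfl⟩
      · exact Submodule.subset_span ⟨2, rfl⟩
      · show x 3 ∈ Submodule.span (ZMod p) (Set.range ![x 0, x 1, x 2])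
        rw [heq]
        refine add_mem (sub_mem (smul_mem _ _ (Submodule.subset_span ⟨0, rfl⟩))
          (smul_mem _ _ (Submodule.subset_span ⟨1, rfl⟩)))
          (smul_mem _ _ (Submodule.subset_span ⟨2, rfl⟩))
    · intro i
      fin_cases i
      exacts [⟨0, rfl⟩, ⟨1, rfl⟩, ⟨2, rfl⟩]
    · apply indep3 _ ![q21, q20, q10]
      · intro i
        fin_cases i <;> simp [z010, z020, z030, z110, z121, z131, z220, z221, z232, z330, z331, z332, l1, l2, l3, l4, l5, l6, l7, l8, hA]
      · intro i j hij
        fin_cases i <;> fin_cases j <;>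
                first
                  | exact absurd rfl hij
                  | simp [Matrix.vecHead, Matrix.vecTail, z010, z020, z030, z110, z121, z131, z220, z221, z232, z330, z331, z332, l1, l2, l3, l4, l5, l6, l7, l8]
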